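/- Fix a real λ_a > 0. For each integer c ≥ 1 let S_c := sup_{θ<0} Λ_c(θ)/θ (a positive real number) and define the amplification factor φ_c := c/(λ_a·S_c). Then φ_c → 1 as c → ∞; equivalently, λ_a·S_c / c → 1 as c → ∞. -/

import Mathlib

open Real Set Filter

/-- `Λ_c(θ) = log( λ_a^c / ((−θ)·(λ_a − θ)^{c−1}) )` for `θ < 0`. -/
noncomputable def LambdaC (c : ℕ) (lam θ : ℝ) : ℝ :=
  Real.log (lam ^ c / ((-θ) * (lam - θ) ^ (c - 1)))

lemma lambdaC_div_le (lam : ℝ) (hlam : 0 < lam) {c : ℕ} (hc : 1 ≤ c) {θ : ℝ} (hθ : θ < 0) :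
    LambdaC c lam θ / θ ≤ c / lam := by
  have hθ' : 0 < -θ := by linarith
  have h1 : 0 < lam - θ := by linarith
  have hc1 : (0:ℝ) ≤ (c:ℝ) - 1 := by
    have : (1:ℝ) ≤ c := by exact_mod_cast hc
    linarith
  rw [div_le_iff_of_neg hθ]
  unfold LambdaC
  rw [Real.log_div (by positivity) (by positivity),
    Real.log_mul (by positivity) (by positivity), Real.log_pow, Real.log_pow,
    Nat.cast_sub hc, Nat.cast_one]
  have hx : Real.log (-θ) ≤ Real.log lam + (-θ)/lam - 1 := by
    have h := Real.log_le_sub_one_of_pos (show (0:ℝ) < (-θ)/lam by positivity)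
    rw [Real.log_div (by positivity) (by positivity)] at h
    linarith
  have hy : Real.log (lam - θ) ≤ Real.log lam + (-θ)/lam := by
    have h := Real.log_le_sub_one_of_pos (show (0:ℝ) < (lam-θ)/lam by positivity)
    rw [Real.log_div (by positivity) (by positivity)] at h
    have e : (lam - θ)/lam - 1 = (-θ)/lam := by field_simp; ring
    linarith
  have key : ((c:ℝ)-1) * Real.log (lam - θ) ≤ ((c:ℝ)-1) * (Real.log lam + (-θ)/lam) :=
    mul_le_mul_of_nonneg_left hy hc1
  have e2 : ((c:ℝ)/lam) * θ = -((c:ℝ) * ((-θ)/lam)) := by field_simp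
  rw [e2]
  nlinarith [key, hx]

noncomputable def Lfun (c : ℕ) : ℝ :=
  ((c:ℝ)-1)/c * (Real.sqrt c * Real.log (1 + 1/Real.sqrt c)) - Real.log (Real.sqrt c) / Real.sqrt c

lemma lambdaC_val (lam : ℝ) (hlam : 0 < lam) {c : ℕ} (hc : 1 ≤ c) :
    lam * (LambdaC c lam (-(lam / Real.sqrt c)) / (-(lam / Real.sqrt c))) / c = Lfun c := by
  have hcR : (0:ℝ) < c := by exact_mod_cast hc
  have hs : 0 < Real.sqrt c := Real.sqrt_pos.2 hcR
  set s := Real.sqrt c with hs_def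
  have hss : s * s = (c:ℝ) := Real.mul_self_sqrt (le_of_lt hcR)
  have h1 : (0:ℝ) < 1 + 1/s := by positivity
  have hΛ : LambdaC c lam (-(lam/s)) = Real.log s - ((c:ℝ)-1) * Real.log (1+1/s) := by
    unfold LambdaC
    have e2 : lam - (-(lam/s)) = lam * (1+1/s) := by field_simp; ring
    rw [neg_neg, e2, Real.log_div (by positivity) (by positivity),
      Real.log_mul (by positivity) (by positivity), Real.log_pow, Real.log_pow,
      Real.log_mul (by positivity) (by positivity),
      Real.log_div (by positivity) (by positivity), Nat.cast_sub hc, Nat.cast_one]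
    ring
  rw [hΛ]
  unfold Lfun
  rw [← hs_def, ← hss]
  field_simp
  ring

lemma Lfun_tendsto : Tendsto Lfun atTop (nhds 1) := by
  have hs : Tendsto (fun c : ℕ => Real.sqrt c) atTop atTop := by
    have h2 : Tendsto (fun x : ℝ => Real.sqrt x) atTop atTop := by
      apply (tendsto_rpow_atTop (by norm_num : (0:ℝ) < 1/2)).congr'
      filter_upwards [eventually_ge_atTop (0:ℝ)] with x hx
      exact (Real.sqrt_eq_rpow x).symm
    exact h2.comp tendsto_natCast_atTop_atTop
  have hA : Tendsto (fun c : ℕ => Real.sqrt c * Real.log (1 + 1/Real.sqrt c)) atTop (nhds 1) := by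
    have := (Real.tendsto_mul_log_one_add_div_atTop 1).comp hs
    simpa [Function.comp_def] using this
  have hB : Tendsto (fun c : ℕ => ((c:ℝ)-1)/c) atTop (nhds 1) := by
    have h0 : Tendsto (fun c : ℕ => ((c:ℝ))⁻¹) atTop (nhds 0) :=
      tendsto_inv_atTop_zero.comp tendsto_natCast_atTop_atTop
    have h1 : Tendsto (fun c : ℕ => 1 - ((c:ℝ))⁻¹) atTop (nhds 1) := by
      simpa using (tendsto_const_nhds (x := (1:ℝ)) (f := (atTop : Filter ℕ))).sub h0
    apply h1.congr'
    filter_upwards [eventually_ge_atTop 1] with c hc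
    have hc0 : (c:ℝ) ≠ 0 := by positivity
    field_simp
  have hC : Tendsto (fun c : ℕ => Real.log (Real.sqrt c) / Real.sqrt c) atTop (nhds 0) := by
    have := Real.isLittleO_log_id_atTop.tendsto_div_nhds_zero.comp hs
    simpa [Function.comp_def] using this
  have h := (hB.mul hA).sub hC
  norm_num at h
  exact h.congr fun c => by simp [Lfun]

/-- Fix a real `λ_a > 0`. With `S_c = sup_{θ<0} Λ_c(θ)/θ` and the
amplification factor `φ_c = c/(λ_a·S_c)`, one has `φ_c → 1` as `c → ∞`. -/
theorem phi_c_tendsto_one (lam : ℝ) (hlam : 0 < lam) :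
    Filter.Tendsto
      (fun c : ℕ =>
        (c : ℝ) / (lam * sSup ((fun θ : ℝ => LambdaC c lam θ / θ) '' Set.Iio 0)))
      Filter.atTop (nhds 1) := by
  set S : ℕ → ℝ := fun c => sSup ((fun θ : ℝ => LambdaC c lam θ / θ) '' Set.Iio 0) with hS
  have hbdd : ∀ c : ℕ, 1 ≤ c → BddAbove ((fun θ : ℝ => LambdaC c lam θ / θ) '' Set.Iio 0) := by
    intro c hc
    refine ⟨(c:ℝ)/lam, ?_⟩
    rintro x ⟨θ, hθ, rfl⟩
    exact lambdaC_div_le lam hlam hc hθ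
  have hne : ∀ c : ℕ, ((fun θ : ℝ => LambdaC c lam θ / θ) '' Set.Iio 0).Nonempty :=
    fun c => ⟨_, ⟨-1, by norm_num, rfl⟩⟩
  have hupper : ∀ᶠ c : ℕ in atTop, lam * S c / c ≤ 1 := by
    filter_upwards [eventually_ge_atTop 1] with c hc
    have hc0 : (0:ℝ) < c := by exact_mod_cast hc
    have hSle : S c ≤ (c:ℝ)/lam :=
      csSup_le (hne c) (by rintro x ⟨θ, hθ, rfl⟩; exact lambdaC_div_le lam hlam hc hθ)
    rw [div_le_one hc0]
    calc lam * S c ≤ lam * ((c:ℝ)/lam) := by nlinarith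
      _ = c := by field_simp
  have hlower : ∀ᶠ c : ℕ in atTop, Lfun c ≤ lam * S c / c := by
    filter_upwards [eventually_ge_atTop 1] with c hc
    have hcR : (0:ℝ) < c := by exact_mod_cast hc
    have hs : 0 < Real.sqrt c := Real.sqrt_pos.2 hcR
    have hθ : -(lam / Real.sqrt c) < 0 := neg_lt_zero.2 (by positivity)
    have hmem : LambdaC c lam (-(lam / Real.sqrt c)) / (-(lam / Real.sqrt c))
        ∈ (fun θ : ℝ => LambdaC c lam θ / θ) '' Set.Iio 0 := ⟨_, hθ, rfl⟩
    have hle := le_csSup (hbdd c hc) hmem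
    rw [← lambdaC_val lam hlam hc]
    gcongr
  have hmain : Tendsto (fun c : ℕ => lam * S c / c) atTop (nhds 1) :=
    tendsto_of_tendsto_of_tendsto_of_le_of_le' Lfun_tendsto tendsto_const_nhds hlower hupper
  have hinv : Tendsto (fun c : ℕ => (lam * S c / c)⁻¹) atTop (nhds 1) := by
    simpa using hmain.inv₀ one_ne_zero
  refine hinv.congr (fun c => ?_)
  rw [inv_div]
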